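/- Let n ≥ 2, let A be the cyclic group of order 2^n with generator g, and let P = (A × A) ⋊ C₂ be the wreath product A ≀ C₂, where the nontrivial element of C₂ acts by swapping the two coordinates of A × A. Set a = ((g,1),1) and y = ((1,1),s), where s is the nontrivial element of C₂, and let B denote the base subgroup A × A of P. Then a maximal subgroup H of P has exactly three involutions if and only if H = B or H = ⟨ay⟩ ⊔ Φ(P). -/

import Mathlib

open SemidirectProduct

/-- The homomorphism from `C₂ = Multiplicative (ZMod 2)` determined by an element `τ`
of a group satisfying `τ * τ = 1`. -/
def homC2 {H : Type*} [Group H] (τ : H) (hτ : τ * τ = 1) : Multiplicative (ZMod 2) →* H where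
  toFun s := if s.toAdd = 0 then 1 else τ
  map_one' := by simp
  map_mul' x y := by
    have h2 : ∀ z : ZMod 2, z = 0 ∨ z = 1 := by decide
    have h11 : (1 : ZMod 2) + 1 = 0 := by decide
    rcases h2 x.toAdd with hx | hx <;> rcases h2 y.toAdd with hy | hy <;>
      simp [toAdd_mul, hx, hy, h11, hτ]

/-- The coordinate-swapping automorphism of `A × A`. -/
def swapAut (A : Type*) [Group A] : MulAut (A × A) := (MulEquiv.prodComm : A × A ≃* A × A)

theorem swapAut_sq (A : Type*) [Group A] : swapAut A * swapAut A = 1 := by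
  ext p <;> simp [swapAut, MulAut.mul_apply]

/-- The action of `C₂` on `A × A` swapping the two coordinates. -/
def swapAction (A : Type*) [Group A] : Multiplicative (ZMod 2) →* MulAut (A × A) :=
  homC2 (swapAut A) (swapAut_sq A)

/-- The wreath product `A ≀ C₂ = (A × A) ⋊ C₂`, where the nontrivial element of `C₂`
acts by swapping the two coordinates of `A × A`. -/
abbrev WreathC2 (A : Type*) [Group A] := (A × A) ⋊[swapAction A] Multiplicative (ZMod 2)

lemma isCoatom_of_index_two {G : Type*} [Group G] {H : Subgroup G} (h : H.index = 2) :
    IsCoatom H := by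
  constructor
  · intro ht; rw [ht, Subgroup.index_top] at h; omega
  · intro K hK
    have hle := hK.le
    have hmul := Subgroup.relIndex_mul_index hle
    rw [h] at hmul
    have hne : H.relIndex K ≠ 1 := fun h1 => hK.not_ge (Subgroup.relIndex_eq_one.mp h1)
    rw [← Subgroup.index_eq_one]
    have hdvd : K.index ∣ 2 := Dvd.intro_left _ hmul
    rcases (Nat.prime_two.eq_one_or_self_of_dvd _ hdvd) with h1 | h2
    · exact h1
    · exfalso; rw [h2] at hmul; omega

lemma index_two_of_coatom {G : Type*} [Group G] [Finite G] {m : ℕ}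
    (hcard : Nat.card G = 2 ^ m) {H : Subgroup G} (hH : IsCoatom H) : H.index = 2 := by
  haveI : Fact (Nat.Prime 2) := ⟨Nat.prime_two⟩
  have hpg : IsPGroup 2 G := IsPGroup.of_card hcard
  have hnil : Group.IsNilpotent G := hpg.isNilpotent
  have hnorm : H.Normal :=
    Subgroup.NormalizerCondition.normal_of_coatom H normalizerCondition_of_isNilpotent hH
  -- index divides 2^m and is ≠ 1
  have hdvd : H.index ∣ 2 ^ m := by rw [← hcard]; exact Subgroup.index_dvd_card H
  have hne1 : H.index ≠ 1 := fun h1 => hH.1 (Subgroup.index_eq_one.mp h1)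
  obtain ⟨j, hj, hjeq⟩ := (Nat.dvd_prime_pow Nat.prime_two).mp hdvd
  have hj0 : j ≠ 0 := by rintro rfl; rw [pow_zero] at hjeq; exact hne1 hjeq
  have h2dvd : 2 ∣ Nat.card (G ⧸ H) := by
    rw [← Subgroup.index_eq_card, hjeq]
    exact dvd_pow_self 2 hj0
  obtain ⟨x, hx⟩ := exists_prime_orderOf_dvd_card' (G := G ⧸ H) 2 h2dvd
  have hx1 : x ≠ 1 := by intro h; rw [h, orderOf_one] at hx; omega
  set K := Subgroup.comap (QuotientGroup.mk' H) (Subgroup.zpowers x) with hK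
  have hHK : H < K := by
    constructor
    · intro g hg
      have h1 : QuotientGroup.mk' H g = 1 := (QuotientGroup.eq_one_iff g).mpr hg
      show QuotientGroup.mk' H g ∈ Subgroup.zpowers x
      rw [h1]; exact Subgroup.one_mem _
    · intro hKH
      obtain ⟨p, hp⟩ := QuotientGroup.mk'_surjective H x
      have hpK : p ∈ K := by simp [hK, Subgroup.mem_comap, hp, Subgroup.mem_zpowers]
      exact hx1 (by rw [← hp]; exact (QuotientGroup.eq_one_iff p).mpr (hKH hpK))
  have hKtop : K = ⊤ := hH.2 K hHK
  have hzp : Subgroup.zpowers x = ⊤ := by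
    have := Subgroup.map_comap_eq_self_of_surjective (QuotientGroup.mk'_surjective H)
      (Subgroup.zpowers x)
    rw [← this, ← hK, hKtop, Subgroup.map_top_of_surjective _ (QuotientGroup.mk'_surjective H)]
  have : Nat.card (G ⧸ H) = 2 := by
    rw [← Subgroup.card_top, ← hzp, Nat.card_zpowers, hx]
  rw [Subgroup.index_eq_card, this]

namespace WT
abbrev C2 := Multiplicative (ZMod 2)
lemma C2_cases (c : C2) : c = 1 ∨ c = Multiplicative.ofAdd 1 := by revert c; decide

abbrev Am (n : ℕ) := Multiplicative (ZMod (2^n))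
abbrev Pn (n : ℕ) := WreathC2 (Am n)

variable (n : ℕ)

lemma swapAction_one {A : Type*} [Group A] (b : A × A) : swapAction A 1 b = b := by simp

lemma swapAction_sigma {A : Type*} [Group A] (b : A × A) :
    swapAction A (Multiplicative.ofAdd 1) b = (b.2, b.1) := by
  simp [swapAction, homC2, swapAut]; rfl


def pEquiv : Pn n ≃ (Am n × Am n) × C2 where
  toFun x := (x.left, x.right)
  invFun p := ⟨p.1, p.2⟩
  left_inv _ := rfl
  right_inv _ := rfl

instance : Finite (Pn n) := Finite.of_equiv _ (pEquiv n).symm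

lemma card_Pn : Nat.card (Pn n) = 2 ^ (2 * n + 1) := by
  rw [Nat.card_congr (pEquiv n), Nat.card_prod, Nat.card_prod]
  have h1 : Nat.card (Am n) = 2 ^ n := by
    rw [Nat.card_congr (Multiplicative.toAdd (α := ZMod (2^n))), Nat.card_zmod]
  have h2 : Nat.card C2 = 2 := by
    rw [Nat.card_congr (Multiplicative.toAdd (α := ZMod 2)), Nat.card_zmod]
  rw [h1, h2]; ring

def pi2 (hn : 2 ≤ n) : ZMod (2^n) →+* ZMod 2 :=
  ZMod.castHom (dvd_pow_self 2 (by omega : n ≠ 0)) (ZMod 2)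

variable (hn : 2 ≤ n)

/-- second character: parity of the sum of base coordinates -/
def chi2 : Pn n →* C2 where
  toFun x := Multiplicative.ofAdd (pi2 n hn (x.left.1.toAdd + x.left.2.toAdd))
  map_one' := by
    show Multiplicative.ofAdd (pi2 n hn ((1 : Am n).toAdd + (1 : Am n).toAdd)) = 1
    simp
  map_mul' x y := by
    have hs : ∀ (ε : C2) (b : Am n × Am n),
        (swapAction (Am n) ε b).1.toAdd + (swapAction (Am n) ε b).2.toAdd
        = b.1.toAdd + b.2.toAdd := by
      intro ε b
      rcases C2_cases ε with h | h <;> subst h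
      · rw [swapAction_one]
      · rw [swapAction_sigma]; exact add_comm _ _
    show Multiplicative.ofAdd (pi2 n hn ((x*y).left.1.toAdd + (x*y).left.2.toAdd)) = _
    rw [mul_left]
    simp only [Prod.fst_mul, Prod.snd_mul, toAdd_mul]
    rw [add_add_add_comm, hs, map_add, ofAdd_add]

def chi1 : Pn n →* C2 := rightHom

def chi3 : Pn n →* C2 := chi2 n hn * chi1 n

-- values
lemma chi2_apply (x : Pn n) :
    chi2 n hn x = Multiplicative.ofAdd (pi2 n hn (x.left.1.toAdd + x.left.2.toAdd)) := rfl

lemma chi3_apply (x : Pn n) : chi3 n hn x = chi2 n hn x * chi1 n x := rfl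

lemma chi2_inr (ε : C2) : chi2 n hn (inr ε) = 1 := by
  rw [chi2_apply]; simp

def gg : Am n := Multiplicative.ofAdd 1
def ga : Pn n := inl (gg n, 1)
def yy : Pn n := inr (Multiplicative.ofAdd 1)

lemma chi1_ga : chi1 n (ga n) = 1 := by simp [chi1, ga]
lemma chi1_yy : chi1 n (yy n) = Multiplicative.ofAdd 1 := by simp [chi1, yy]
lemma chi2_yy : chi2 n hn (yy n) = 1 := chi2_inr n hn _

lemma pi2_one : pi2 n hn 1 = 1 := map_one _

lemma one_ne_zero_zmod2 : (1 : ZMod 2) ≠ 0 := by decide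

lemma chi2_ga : chi2 n hn (ga n) = Multiplicative.ofAdd 1 := by
  rw [chi2_apply]
  show Multiplicative.ofAdd (pi2 n hn ((1 : ZMod (2^n)) + (0 : ZMod (2^n)))) = _
  rw [add_zero, map_one]

lemma surj_of (f : Pn n →* C2) (x : Pn n) (hx : f x = Multiplicative.ofAdd 1) :
    Function.Surjective f := by
  intro c
  rcases C2_cases c with h | h
  · exact ⟨1, by rw [map_one, h]⟩
  · exact ⟨x, by rw [hx, h]⟩

lemma card_C2 : Nat.card C2 = 2 := by
  rw [Nat.card_congr (Multiplicative.toAdd (α := ZMod 2)), Nat.card_zmod]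

lemma index_ker_two (f : Pn n →* C2) (hf : Function.Surjective f) : f.ker.index = 2 := by
  rw [Subgroup.index_ker, MonoidHom.range_eq_top.mpr hf, Subgroup.card_top, card_C2]

-- ## ZMod facts
lemma hNm (hn : 2 ≤ n) : 2^n = 2 * 2^(n-1) := by
  have h : n - 1 + 1 = n := by omega
  calc 2^n = 2^(n-1+1) := by rw [h]
  _ = 2^(n-1) * 2 := pow_succ 2 (n-1)
  _ = 2 * 2^(n-1) := mul_comm _ _

lemma hm_ne (hn : 2 ≤ n) : ((2^(n-1) : ℕ) : ZMod (2^n)) ≠ 0 := by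
  intro h
  rw [ZMod.natCast_eq_zero_iff] at h
  have h1 : (0:ℕ) < 2^(n-1) := Nat.pow_pos (by omega)
  have h2 : 2^(n-1) < 2^n := Nat.pow_lt_pow_right (by omega) (by omega)
  have := Nat.le_of_dvd h1 h
  omega

lemma hm_sq (hn : 2 ≤ n) : ((2^(n-1) : ℕ) : ZMod (2^n)) + ((2^(n-1) : ℕ) : ZMod (2^n)) = 0 := by
  rw [← Nat.cast_add, ← two_mul, ← hNm n hn, ZMod.natCast_self]

lemma solve2 (hn : 2 ≤ n) (u : ZMod (2^n)) (h : u + u = 0) :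
    u = 0 ∨ u = ((2^(n-1) : ℕ) : ZMod (2^n)) := by
  have hvlt : u.val < 2^n := ZMod.val_lt u
  have hval : (u.val + u.val) % 2^n = 0 := by
    have := congrArg ZMod.val h
    rwa [ZMod.val_add, ZMod.val_zero] at this
  obtain ⟨k, hk⟩ := Nat.dvd_of_mod_eq_zero hval
  have hN := hNm n hn
  have hk2 : k < 2 := by
    by_contra hge
    push_neg at hge
    have : 2^n * 2 ≤ 2^n * k := Nat.mul_le_mul_left _ hge
    omega
  have hrw : u = ((u.val : ℕ) : ZMod (2^n)) := (ZMod.natCast_rightInverse u).symm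
  interval_cases k
  · left
    have hv0 : u.val = 0 := by omega
    rw [hrw, hv0, Nat.cast_zero]
  · right
    rw [hrw]
    congr 1
    omega

lemma pi2_natCast (hn : 2 ≤ n) (k : ℕ) : pi2 n hn ((k : ℕ) : ZMod (2^n)) = (k : ZMod 2) :=
  map_natCast _ k

lemma pi2_m (hn : 2 ≤ n) : pi2 n hn ((2^(n-1) : ℕ) : ZMod (2^n)) = 0 := by
  rw [pi2_natCast, Nat.cast_pow]
  have h2 : ((2:ℕ) : ZMod 2) = 0 := by decide
  rw [h2, zero_pow (by omega : n - 1 ≠ 0)]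

lemma pi2_even (hn : 2 ≤ n) (x : ZMod (2^n)) (h : pi2 n hn x = 0) : ∃ w, x = w + w := by
  have hrw : x = ((x.val : ℕ) : ZMod (2^n)) := (ZMod.natCast_rightInverse x).symm
  rw [hrw, pi2_natCast] at h
  rw [ZMod.natCast_eq_zero_iff] at h
  obtain ⟨c, hc⟩ := h
  exact ⟨(c : ZMod (2^n)), by rw [hrw, hc]; push_cast; ring⟩

-- ## powers and products
lemma gg_pow (k : ℕ) : (gg n)^k = Multiplicative.ofAdd ((k : ZMod (2^n))) := by
  rw [gg, ← ofAdd_nsmul]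
  congr 1
  rw [nsmul_eq_mul, mul_one]

lemma inl_mk_pow (u v : Am n) (k : ℕ) : (inl (u, v) : Pn n)^k = inl (u^k, v^k) := by
  rw [← map_pow, Prod.pow_mk]

lemma gaYY_sq : (ga n * yy n) * (ga n * yy n) = inl (gg n, gg n) := by
  have key : ga n * yy n = (⟨(gg n, 1), Multiplicative.ofAdd 1⟩ : Pn n) := by
    rw [mk_eq_inl_mul_inr]
    rfl
  rw [key, mul_def, swapAction_sigma]
  show (⟨((gg n, 1) : Am n × Am n) * (1, gg n),
    Multiplicative.ofAdd (1:ZMod 2) * Multiplicative.ofAdd 1⟩ : Pn n) = _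
  rw [Prod.mk_mul_mk, mul_one, one_mul]
  have h2 : (Multiplicative.ofAdd (1:ZMod 2)) * Multiplicative.ofAdd 1 = 1 := by decide
  rw [h2]
  rfl

-- ## the Frattini candidate
def FF : Subgroup (Pn n) := (chi1 n).ker ⊓ (chi2 n hn).ker

lemma mem_FF (x : Pn n) :
    x ∈ FF n hn ↔ x.right = 1 ∧ pi2 n hn (x.left.1.toAdd + x.left.2.toAdd) = 0 := by
  rw [FF, Subgroup.mem_inf, MonoidHom.mem_ker, MonoidHom.mem_ker, chi2_apply]
  have h1 : chi1 n x = x.right := rfl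
  rw [h1, ofAdd_eq_one]

lemma mem_of_FF {H : Subgroup (Pn n)} (h1 : (inl (gg n, gg n) : Pn n) ∈ H)
    (h2 : ga n * ga n ∈ H) {x : Pn n} (hx : x ∈ FF n hn) : x ∈ H := by
  rw [mem_FF] at hx
  obtain ⟨hr, hp⟩ := hx
  obtain ⟨w, hw⟩ := pi2_even n hn _ hp
  have hb : ((x.left.2.toAdd.val : ℕ) : ZMod (2^n)) = x.left.2.toAdd :=
    ZMod.natCast_rightInverse _
  have hc : (((w - x.left.2.toAdd).val : ℕ) : ZMod (2^n)) = w - x.left.2.toAdd :=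
    ZMod.natCast_rightInverse _
  have hxeq : x = (inl (gg n, gg n) : Pn n)^(x.left.2.toAdd.val)
      * (ga n * ga n)^((w - x.left.2.toAdd).val) := by
    have hx1 : x = inl x.left := by
      conv_lhs => rw [← inl_left_mul_inr_right x]
      rw [hr, map_one, mul_one]
    have hga2 : ga n * ga n = (inl (gg n * gg n, 1) : Pn n) := by
      rw [ga, ← map_mul]
      congr 1
      rw [Prod.mk_mul_mk, mul_one]
    rw [hx1, hga2, inl_mk_pow, inl_mk_pow, ← map_mul, inl_inj]
    have e1 : (gg n)^(x.left.2.toAdd.val) * ((gg n * gg n)^((w - x.left.2.toAdd).val))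
        = x.left.1 := by
      rw [← pow_two, ← pow_mul, ← pow_add, gg_pow]
      conv_rhs => rw [← ofAdd_toAdd x.left.1]
      congr 1
      push_cast
      rw [hb, hc]
      have hthis : x.left.1.toAdd + x.left.2.toAdd = w + w := hw
      linear_combination -hthis
    have e2 : (gg n)^(x.left.2.toAdd.val) * (1 : Am n)^((w - x.left.2.toAdd).val)
        = x.left.2 := by
      rw [one_pow, mul_one, gg_pow, hb, ofAdd_toAdd]
    calc x.left = ((gg n)^(x.left.2.toAdd.val) * ((gg n * gg n)^((w - x.left.2.toAdd).val)),
        (gg n)^(x.left.2.toAdd.val) * (1 : Am n)^((w - x.left.2.toAdd).val)) := by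
          rw [e1, e2]
      _ = ((gg n)^(x.left.2.toAdd.val), (gg n)^(x.left.2.toAdd.val))
          * ((gg n * gg n)^((w - x.left.2.toAdd).val), (1 : Am n)^((w - x.left.2.toAdd).val)) := by
          rw [Prod.mk_mul_mk]
  rw [hxeq]
  exact mul_mem (pow_mem h1 _) (pow_mem h2 _)

lemma FF_le_of_index_two {H : Subgroup (Pn n)} (h : H.index = 2) : FF n hn ≤ H := by
  intro x hx
  refine mem_of_FF n hn ?_ (Subgroup.mul_self_mem_of_index_two h (ga n)) hx
  have h2 := Subgroup.mul_self_mem_of_index_two h (ga n * yy n)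
  rwa [gaYY_sq] at h2

lemma coatom_ker1 : IsCoatom (chi1 n).ker :=
  isCoatom_of_index_two (index_ker_two n _ (surj_of n _ (yy n) (chi1_yy n)))

lemma coatom_ker2 : IsCoatom (chi2 n hn).ker :=
  isCoatom_of_index_two (index_ker_two n _ (surj_of n _ (ga n) (chi2_ga n hn)))

lemma chi3_yy : chi3 n hn (yy n) = Multiplicative.ofAdd 1 := by
  rw [chi3_apply, chi2_yy, chi1_yy, one_mul]

lemma coatom_ker3 : IsCoatom (chi3 n hn).ker :=
  isCoatom_of_index_two (index_ker_two n _ (surj_of n _ (yy n) (chi3_yy n hn)))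

lemma frattini_eq : frattini (Pn n) = FF n hn := by
  apply le_antisymm
  · exact le_inf (frattini_le_coatom (coatom_ker1 n)) (frattini_le_coatom (coatom_ker2 n hn))
  · show FF n hn ≤ ⨅ K ∈ {K : Subgroup (Pn n) | IsCoatom K}, K
    exact le_iInf₂ fun K hK => FF_le_of_index_two n hn (index_two_of_coatom (card_Pn n) hK)

lemma chi3_gaYY : chi3 n hn (ga n * yy n) = 1 := by
  rw [map_mul, chi3_apply, chi3_apply, chi1_ga, chi2_ga, chi1_yy, chi2_yy, mul_one, one_mul]
  decide

lemma ker_chi3_eq : (chi3 n hn).ker = Subgroup.zpowers (ga n * yy n) ⊔ FF n hn := by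
  apply le_antisymm
  · intro x hx
    rw [MonoidHom.mem_ker, chi3_apply] at hx
    rcases C2_cases (chi1 n x) with h1 | h1
    · have h2 : chi2 n hn x = 1 := by rwa [h1, mul_one] at hx
      exact Subgroup.mem_sup_right (by rw [FF, Subgroup.mem_inf]; exact ⟨h1, h2⟩)
    · have h2 : chi2 n hn x = Multiplicative.ofAdd 1 := by
        rcases C2_cases (chi2 n hn x) with h2 | h2
        · exfalso
          rw [h1, h2, one_mul] at hx
          exact (by decide : (Multiplicative.ofAdd (1:ZMod 2)) ≠ 1) hx
        · exact h2
      have hf : x * (ga n * yy n)⁻¹ ∈ FF n hn := by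
        rw [FF, Subgroup.mem_inf, MonoidHom.mem_ker, MonoidHom.mem_ker]
        constructor
        · rw [map_mul, map_inv, map_mul, chi1_ga, chi1_yy, h1, one_mul, mul_inv_cancel]
        · rw [map_mul, map_inv, map_mul, chi2_ga, chi2_yy, h2, mul_one, mul_inv_cancel]
      have hx2 : x = (x * (ga n * yy n)⁻¹) * (ga n * yy n) := by group
      rw [hx2]
      exact mul_mem (Subgroup.mem_sup_right hf)
        (Subgroup.mem_sup_left (Subgroup.mem_zpowers _))
  · rw [sup_le_iff]
    constructor
    · rw [Subgroup.zpowers_le]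
      exact MonoidHom.mem_ker.mpr (chi3_gaYY n hn)
    · intro x hx
      rw [FF, Subgroup.mem_inf, MonoidHom.mem_ker, MonoidHom.mem_ker] at hx
      rw [MonoidHom.mem_ker, chi3_apply, hx.1, hx.2, one_mul]

lemma eq_coatom_of_le {G : Type*} [Group G] {H K : Subgroup G}
    (hH : IsCoatom H) (hK : IsCoatom K) (h : K ≤ H) : H = K :=
  ((eq_or_lt_of_le h).resolve_right (fun hlt => hH.1 (hK.2 H hlt))).symm

lemma inr_mem {H : Subgroup (Pn n)} (hy : yy n ∈ H) (ε : C2) : (inr ε : Pn n) ∈ H := by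
  rcases C2_cases ε with h | h
  · rw [h, map_one]; exact one_mem H
  · rw [h]; exact hy

lemma gg_gg_mem_FF : (inl (gg n, gg n) : Pn n) ∈ FF n hn := by
  rw [mem_FF]
  refine ⟨rfl, ?_⟩
  show pi2 n hn ((1 : ZMod (2^n)) + 1) = 0
  have h2 : ((1 : ZMod (2^n)) + 1) = ((2:ℕ) : ZMod (2^n)) := by push_cast; ring
  rw [h2, pi2_natCast]
  decide

lemma base_mem {H : Subgroup (Pn n)} (hFF : FF n hn ≤ H) (ha : ga n ∈ H)
    (b : Am n × Am n) : (inl b : Pn n) ∈ H := by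
  have hgb : (inl (1, gg n) : Pn n) ∈ H := by
    have heq : (inl (1, gg n) : Pn n) = (ga n)⁻¹ * inl (gg n, gg n) := by
      rw [ga, ← map_inv, ← map_mul]
      congr 1
      rw [Prod.inv_mk, Prod.mk_mul_mk, inv_mul_cancel, inv_one, one_mul]
    rw [heq]
    exact mul_mem (inv_mem ha) (hFF (gg_gg_mem_FF n hn))
  have hb1 : ((b.1.toAdd.val : ℕ) : ZMod (2^n)) = b.1.toAdd := ZMod.natCast_rightInverse _
  have hb2 : ((b.2.toAdd.val : ℕ) : ZMod (2^n)) = b.2.toAdd := ZMod.natCast_rightInverse _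
  have hdecomp : (inl b : Pn n) = (ga n)^(b.1.toAdd.val) * (inl (1, gg n) : Pn n)^(b.2.toAdd.val) := by
    rw [ga, inl_mk_pow, inl_mk_pow, ← map_mul, inl_inj, Prod.mk_mul_mk, one_pow, one_pow,
      mul_one, one_mul, gg_pow, gg_pow, hb1, hb2, ofAdd_toAdd, ofAdd_toAdd]
  rw [hdecomp]
  exact mul_mem (pow_mem ha _) (pow_mem hgb _)

lemma classify {H : Subgroup (Pn n)} (hH : IsCoatom H) :
    H = (chi1 n).ker ∨ H = (chi2 n hn).ker ∨ H = (chi3 n hn).ker := by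
  have hidx : H.index = 2 := index_two_of_coatom (card_Pn n) hH
  have hFF : FF n hn ≤ H := FF_le_of_index_two n hn hidx
  by_cases ha : ga n ∈ H
  · by_cases hy : yy n ∈ H
    · exfalso
      apply hH.1
      rw [Subgroup.eq_top_iff']
      intro x
      rw [← inl_left_mul_inr_right x]
      exact mul_mem (base_mem n hn hFF ha x.left) (inr_mem n hy x.right)
    · left
      apply eq_coatom_of_le hH (coatom_ker1 n)
      intro x hx
      rw [MonoidHom.mem_ker] at hx
      have hr : x.right = 1 := hx
      rw [← inl_left_mul_inr_right x, hr, map_one, mul_one]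
      exact base_mem n hn hFF ha x.left
  · by_cases hy : yy n ∈ H
    · right; left
      apply eq_coatom_of_le hH (coatom_ker2 n hn)
      intro x hx
      rw [MonoidHom.mem_ker, chi2_apply, ofAdd_eq_one] at hx
      rw [← inl_left_mul_inr_right x]
      refine mul_mem (hFF ?_) (inr_mem n hy x.right)
      rw [mem_FF]
      exact ⟨rfl, hx⟩
    · right; right
      have hxy : ga n * yy n ∈ H := (Subgroup.mul_mem_iff_of_index_two hidx).2 (iff_of_false ha hy)
      apply eq_coatom_of_le hH (coatom_ker3 n hn)
      rw [ker_chi3_eq, sup_le_iff]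
      exact ⟨Subgroup.zpowers_le.2 hxy, hFF⟩

-- ## involutions
lemma ord2_iff (x : Pn n) : orderOf x = 2 ↔ x * x = 1 ∧ x ≠ 1 := by
  haveI : Fact (Nat.Prime 2) := ⟨Nat.prime_two⟩
  constructor
  · intro h
    refine ⟨?_, ?_⟩
    · have h2 := pow_orderOf_eq_one x
      rw [h, pow_two] at h2
      exact h2
    · intro h1
      rw [h1, orderOf_one] at h
      omega
  · rintro ⟨h1, h2⟩
    exact orderOf_eq_prime (by rw [pow_two]; exact h1) h2

lemma sigma_sq : (Multiplicative.ofAdd (1:ZMod 2)) * Multiplicative.ofAdd 1 = 1 := by decide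

lemma sigma_ne_one : (Multiplicative.ofAdd (1:ZMod 2)) ≠ 1 := by decide

lemma sq_one_of_base (x : Pn n) (hr : x.right = 1) :
    x * x = 1 ↔ x.left.1 * x.left.1 = 1 ∧ x.left.2 * x.left.2 = 1 := by
  have e : x * x = inl (x.left * x.left) := by
    rw [mul_def, hr, map_one, MulAut.one_apply, one_mul]
    rfl
  rw [e]
  rw [show (1 : Pn n) = inl 1 from (map_one _).symm, inl_inj]
  rw [Prod.ext_iff]
  simp [Prod.fst_mul, Prod.snd_mul]

lemma sq_one_of_sigma (x : Pn n) (hr : x.right = Multiplicative.ofAdd 1) :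
    x * x = 1 ↔ x.left.1 * x.left.2 = 1 := by
  have e : x * x = inl (x.left * (x.left.2, x.left.1)) := by
    rw [mul_def, hr, swapAction_sigma, sigma_sq]
    rfl
  rw [e]
  rw [show (1 : Pn n) = inl 1 from (map_one _).symm, inl_inj]
  rw [Prod.ext_iff]
  simp only [Prod.fst_mul, Prod.snd_mul, Prod.fst_one, Prod.snd_one]
  constructor
  · exact fun h => h.1
  · intro h
    exact ⟨h, by rw [mul_comm]; exact h⟩

def hh : Am n := Multiplicative.ofAdd ((2^(n-1) : ℕ) : ZMod (2^n))

lemma hh_sq (hn : 2 ≤ n) : hh n * hh n = 1 := by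
  rw [hh, ← ofAdd_add, hm_sq n hn]
  rfl

lemma hh_ne_one (hn : 2 ≤ n) : hh n ≠ 1 := by
  intro h
  exact hm_ne n hn (congrArg Multiplicative.toAdd h)

lemma mul_self_eq_one_iff_add (u : Am n) : u * u = 1 ↔ u.toAdd + u.toAdd = 0 := by
  constructor
  · intro h
    have := congrArg Multiplicative.toAdd h
    rwa [toAdd_mul, toAdd_one] at this
  · intro h
    have := congrArg (Multiplicative.ofAdd (α := ZMod (2^n))) h
    rwa [ofAdd_add, ofAdd_toAdd, ofAdd_zero] at this

lemma solveM (hn : 2 ≤ n) (u : Am n) (h : u * u = 1) : u = 1 ∨ u = hh n := by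
  rcases solve2 n hn u.toAdd ((mul_self_eq_one_iff_add n u).1 h) with h1 | h1
  · left
    rw [← ofAdd_toAdd u, h1, ofAdd_zero]
  · right
    rw [← ofAdd_toAdd u, h1]
    rfl

-- the three base involutions
lemma invol_inl (p : Am n × Am n) (hp1 : p.1 * p.1 = 1) (hp2 : p.2 * p.2 = 1) (hne : p ≠ 1) :
    orderOf (inl p : Pn n) = 2 := by
  rw [ord2_iff]
  constructor
  · rw [← map_mul]
    have hpp : p * p = 1 := by
      rw [Prod.ext_iff]
      exact ⟨by rw [Prod.fst_mul, hp1]; rfl, by rw [Prod.snd_mul, hp2]; rfl⟩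
    rw [hpp, map_one]
  · intro h
    apply hne
    rw [show (1 : Pn n) = inl 1 from (map_one _).symm, inl_inj] at h
    exact h

lemma base_invol_mem_T (hn : 2 ≤ n) {x : Pn n} (hr : x.right = 1) (hsq : x * x = 1) (hne : x ≠ 1) :
    x ∈ ({inl (hh n, 1), inl (1, hh n), inl (hh n, hh n)} : Set (Pn n)) := by
  rw [sq_one_of_base n x hr] at hsq
  have hx1 : x = inl x.left := by
    conv_lhs => rw [← inl_left_mul_inr_right x]
    rw [hr, map_one, mul_one]
  have hleft : x.left = (x.left.1, x.left.2) := rfl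
  simp only [Set.mem_insert_iff, Set.mem_singleton_iff]
  rcases solveM n hn _ hsq.1 with h1 | h1 <;> rcases solveM n hn _ hsq.2 with h2 | h2
  · exfalso
    apply hne
    rw [hx1, hleft, h1, h2]
    rfl
  · right; left
    rw [hx1, hleft, h1, h2]
  · left
    rw [hx1, hleft, h1, h2]
  · right; right
    rw [hx1, hleft, h1, h2]

lemma chi2_inl_hh1 : chi2 n hn (inl (hh n, 1)) = 1 := by
  rw [chi2_apply, ofAdd_eq_one]
  show pi2 n hn (((2^(n-1) : ℕ) : ZMod (2^n)) + 0) = 0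
  rw [add_zero, pi2_m n hn]

lemma chi2_inl_1hh : chi2 n hn (inl (1, hh n)) = 1 := by
  rw [chi2_apply, ofAdd_eq_one]
  show pi2 n hn (0 + ((2^(n-1) : ℕ) : ZMod (2^n))) = 0
  rw [zero_add, pi2_m n hn]

lemma chi2_inl_hhhh : chi2 n hn (inl (hh n, hh n)) = 1 := by
  rw [chi2_apply, ofAdd_eq_one]
  show pi2 n hn (((2^(n-1) : ℕ) : ZMod (2^n)) + ((2^(n-1) : ℕ) : ZMod (2^n))) = 0
  rw [hm_sq n hn, map_zero]

lemma chi1_inl (b : Am n × Am n) : chi1 n (inl b) = 1 := rightHom_inl b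

lemma invol_ker1 (hn : 2 ≤ n) : {x : Pn n | x ∈ (chi1 n).ker ∧ orderOf x = 2}
    = {inl (hh n, 1), inl (1, hh n), inl (hh n, hh n)} := by
  ext x
  simp only [Set.mem_setOf_eq, Set.mem_insert_iff, Set.mem_singleton_iff]
  constructor
  · rintro ⟨hk, ho⟩
    rw [MonoidHom.mem_ker] at hk
    have hr : x.right = 1 := hk
    rw [ord2_iff] at ho
    have := base_invol_mem_T n hn hr ho.1 ho.2
    simpa only [Set.mem_insert_iff, Set.mem_singleton_iff] using this
  · have hmem : ∀ p : Am n × Am n, p.1*p.1 = 1 → p.2*p.2 = 1 → p ≠ 1 →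
        (inl p : Pn n) ∈ (chi1 n).ker ∧ orderOf (inl p : Pn n) = 2 := by
      intro p q1 q2 qne
      exact ⟨MonoidHom.mem_ker.mpr (chi1_inl n p), invol_inl n p q1 q2 qne⟩
    rintro (rfl | rfl | rfl)
    · exact hmem _ (hh_sq n hn) (mul_one 1) (fun h => hh_ne_one n hn (congrArg Prod.fst h))
    · exact hmem _ (mul_one 1) (hh_sq n hn) (fun h => hh_ne_one n hn (congrArg Prod.snd h))
    · exact hmem _ (hh_sq n hn) (hh_sq n hn) (fun h => hh_ne_one n hn (congrArg Prod.fst h))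

lemma chi3_inl_hh1 (hn : 2 ≤ n) : chi3 n hn (inl (hh n, 1)) = 1 := by
  rw [chi3_apply, chi2_inl_hh1 n hn, chi1_inl, mul_one]

lemma chi3_inl_1hh (hn : 2 ≤ n) : chi3 n hn (inl (1, hh n)) = 1 := by
  rw [chi3_apply, chi2_inl_1hh n hn, chi1_inl, mul_one]

lemma chi3_inl_hhhh (hn : 2 ≤ n) : chi3 n hn (inl (hh n, hh n)) = 1 := by
  rw [chi3_apply, chi2_inl_hhhh n hn, chi1_inl, mul_one]

lemma invol_ker3 (hn : 2 ≤ n) : {x : Pn n | x ∈ (chi3 n hn).ker ∧ orderOf x = 2}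
    = {inl (hh n, 1), inl (1, hh n), inl (hh n, hh n)} := by
  ext x
  simp only [Set.mem_setOf_eq, Set.mem_insert_iff, Set.mem_singleton_iff]
  constructor
  · rintro ⟨hk, ho⟩
    rw [MonoidHom.mem_ker] at hk
    rw [ord2_iff] at ho
    rcases C2_cases x.right with hr | hr
    · simpa only [Set.mem_insert_iff, Set.mem_singleton_iff] using
        base_invol_mem_T n hn hr ho.1 ho.2
    · exfalso
      have hsum : x.left.1 * x.left.2 = 1 := (sq_one_of_sigma n x hr).1 ho.1
      have h2 : chi2 n hn x = 1 := by
        rw [chi2_apply, ofAdd_eq_one]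
        have ht : x.left.1.toAdd + x.left.2.toAdd = 0 := by
          have := congrArg Multiplicative.toAdd hsum
          rwa [toAdd_mul, toAdd_one] at this
        rw [ht, map_zero]
      rw [chi3_apply, h2, one_mul] at hk
      have hone : (Multiplicative.ofAdd (1:ZMod 2)) = 1 := by
        rw [← hr]
        exact hk
      exact sigma_ne_one hone
  · have hmem : ∀ p : Am n × Am n, chi3 n hn (inl p) = 1 → p.1*p.1 = 1 → p.2*p.2 = 1 → p ≠ 1 →
        (inl p : Pn n) ∈ (chi3 n hn).ker ∧ orderOf (inl p : Pn n) = 2 := by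
      intro p q0 q1 q2 qne
      exact ⟨MonoidHom.mem_ker.mpr q0, invol_inl n p q1 q2 qne⟩
    rintro (rfl | rfl | rfl)
    · exact hmem _ (chi3_inl_hh1 n hn) (hh_sq n hn) (mul_one 1)
        (fun h => hh_ne_one n hn (congrArg Prod.fst h))
    · exact hmem _ (chi3_inl_1hh n hn) (mul_one 1) (hh_sq n hn)
        (fun h => hh_ne_one n hn (congrArg Prod.snd h))
    · exact hmem _ (chi3_inl_hhhh n hn) (hh_sq n hn) (hh_sq n hn)
        (fun h => hh_ne_one n hn (congrArg Prod.fst h))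

lemma yy_sq : yy n * yy n = 1 := by
  rw [yy, ← map_mul, sigma_sq, map_one]

lemma yy_ne_one : yy n ≠ 1 := fun h => sigma_ne_one (congrArg SemidirectProduct.right h)

lemma yy_ord : orderOf (yy n) = 2 := (ord2_iff n _).2 ⟨yy_sq n, yy_ne_one n⟩

lemma T_ncard (hn : 2 ≤ n) :
    ({inl (hh n, 1), inl (1, hh n), inl (hh n, hh n)} : Set (Pn n)).ncard = 3 := by
  apply Set.ncard_eq_three.mpr
  refine ⟨_, _, _, ?_, ?_, ?_, rfl⟩
  · exact fun h => hh_ne_one n hn (congrArg Prod.fst (inl_inj.1 h))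
  · exact fun h => hh_ne_one n hn (congrArg Prod.snd (inl_inj.1 h)).symm
  · exact fun h => hh_ne_one n hn (congrArg Prod.fst (inl_inj.1 h)).symm

lemma invol_ker2_superset (hn : 2 ≤ n) :
    (insert (yy n) {inl (hh n, 1), inl (1, hh n), inl (hh n, hh n)} : Set (Pn n))
      ⊆ {x : Pn n | x ∈ (chi2 n hn).ker ∧ orderOf x = 2} := by
  intro z hz
  simp only [Set.mem_insert_iff, Set.mem_singleton_iff] at hz
  rcases hz with rfl | rfl | rfl | rfl
  · exact ⟨MonoidHom.mem_ker.mpr (chi2_yy n hn), yy_ord n⟩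
  · exact ⟨MonoidHom.mem_ker.mpr (chi2_inl_hh1 n hn),
      invol_inl n _ (hh_sq n hn) (mul_one 1) (fun h => hh_ne_one n hn (congrArg Prod.fst h))⟩
  · exact ⟨MonoidHom.mem_ker.mpr (chi2_inl_1hh n hn),
      invol_inl n _ (mul_one 1) (hh_sq n hn) (fun h => hh_ne_one n hn (congrArg Prod.snd h))⟩
  · exact ⟨MonoidHom.mem_ker.mpr (chi2_inl_hhhh n hn),
      invol_inl n _ (hh_sq n hn) (hh_sq n hn) (fun h => hh_ne_one n hn (congrArg Prod.fst h))⟩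

lemma ncard4 (hn : 2 ≤ n) :
    (insert (yy n) {inl (hh n, 1), inl (1, hh n), inl (hh n, hh n)} : Set (Pn n)).ncard = 4 := by
  rw [Set.ncard_insert_of_notMem ?_ (Set.toFinite _), T_ncard n hn]
  simp only [Set.mem_insert_iff, Set.mem_singleton_iff]
  push_neg
  refine ⟨?_, ?_, ?_⟩ <;>
    exact fun h => sigma_ne_one (congrArg SemidirectProduct.right h)

lemma invol_ker2_ncard_ne (hn : 2 ≤ n) :
    {x : Pn n | x ∈ (chi2 n hn).ker ∧ orderOf x = 2}.ncard ≠ 3 := by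
  have h4 : 4 ≤ {x : Pn n | x ∈ (chi2 n hn).ker ∧ orderOf x = 2}.ncard := by
    rw [← ncard4 n hn]
    exact Set.ncard_le_ncard (invol_ker2_superset n hn) (Set.toFinite _)
  omega

end WT

/-- For `P = A ≀ C₂` with `A` cyclic of order `2 ^ n` (`n ≥ 2`) with generator `g`,
`a = ((g,1),1)` and `y = ((1,1),s)`, a maximal subgroup `H` of `P` has exactly three
involutions if and only if `H` is the base subgroup `A × A` or `H = ⟨a y⟩ ⊔ Φ(P)`. -/
theorem maximal_subgroup_three_involutions (n : ℕ) (hn : 2 ≤ n)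
    (H : Subgroup (WreathC2 (Multiplicative (ZMod (2 ^ n))))) (hH : IsCoatom H) :
    letI A := Multiplicative (ZMod (2 ^ n))
    letI P := WreathC2 A
    let g : A := Multiplicative.ofAdd 1
    let a : P := inl (g, 1)
    let y : P := inr (Multiplicative.ofAdd 1)
    {x : P | x ∈ H ∧ orderOf x = 2}.ncard = 3 ↔
      H = (inl : (A × A) →* P).range ∨ H = Subgroup.zpowers (a * y) ⊔ frattini P := by

  intro g a y
  have e1 : ((inl : (WT.Am n × WT.Am n) →* WT.Pn n).range) = (WT.chi1 n).ker :=
    range_inl_eq_ker_rightHom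
  have e2 : Subgroup.zpowers (WT.ga n * WT.yy n) ⊔ frattini (WT.Pn n) = (WT.chi3 n hn).ker := by
    rw [WT.frattini_eq n hn]
    exact (WT.ker_chi3_eq n hn).symm
  show {x : WT.Pn n | x ∈ H ∧ orderOf x = 2}.ncard = 3 ↔
      H = (inl : (WT.Am n × WT.Am n) →* WT.Pn n).range ∨
      H = Subgroup.zpowers (WT.ga n * WT.yy n) ⊔ frattini (WT.Pn n)
  constructor
  · intro h3
    rcases WT.classify n hn hH with h | h | h
    · left
      rw [h, e1]
    · exfalso
      apply WT.invol_ker2_ncard_ne n hn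
      rw [← h]
      exact h3
    · right
      rw [h, e2]
  · rintro (h | h)
    · rw [h, e1]
      have := WT.invol_ker1 n hn
      rw [show {x : WT.Pn n | x ∈ (WT.chi1 n).ker ∧ orderOf x = 2}
          = {inl (WT.hh n, 1), inl (1, WT.hh n), inl (WT.hh n, WT.hh n)} from WT.invol_ker1 n hn]
      exact WT.T_ncard n hn
    · rw [h, e2]
      rw [show {x : WT.Pn n | x ∈ (WT.chi3 n hn).ker ∧ orderOf x = 2}
          = {inl (WT.hh n, 1), inl (1, WT.hh n), inl (WT.hh n, WT.hh n)} from WT.invol_ker3 n hn]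
      exact WT.T_ncard n hn
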